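/- Let G : M^{m×d} → [0,∞] be Borel measurable with effective domain 𝔾. Suppose 0 ∈ int(𝔾) and there exists C > 0 such that G(tξ + (1−t)ζ) ≤ C(1 + G(ξ) + G(ζ)) for all ξ, ζ and t ∈ (0,1). Then int(𝔾) equals the union over t ∈ [0,1) of the sets t·cl(𝔾). -/

import Mathlib

open MeasureTheory ENNReal Pointwise

noncomputable instance {m d : ℕ} : MeasurableSpace (Matrix (Fin m) (Fin d) ℝ) := borel _
instance {m d : ℕ} : BorelSpace (Matrix (Fin m) (Fin d) ℝ) := ⟨rfl⟩


/-- If `0 ∈ int(𝔾)` and `G(tξ+(1−t)ζ) ≤ C(1+G(ξ)+G(ζ))`, then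
`int(𝔾) = ⋃_{t ∈ [0,1)} t · cl(𝔾)`. -/
theorem interior_eq_iUnion_smul_closure {m d : ℕ}
    (G : Matrix (Fin m) (Fin d) ℝ → ℝ≥0∞) (hGmeas : Measurable G)
    (hzero : (0 : Matrix (Fin m) (Fin d) ℝ) ∈ interior {ξ | G ξ < ⊤})
    (C : ℝ≥0∞) (hC : 0 < C) (hCtop : C ≠ ⊤)
    (hG : ∀ ξ ζ : Matrix (Fin m) (Fin d) ℝ, ∀ t ∈ Set.Ioo (0:ℝ) 1,
      G (t • ξ + (1 - t) • ζ) ≤ C * (1 + G ξ + G ζ)) :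
    interior {ξ : Matrix (Fin m) (Fin d) ℝ | G ξ < ⊤}
      = ⋃ t ∈ Set.Ico (0:ℝ) 1, t • closure {ξ : Matrix (Fin m) (Fin d) ℝ | G ξ < ⊤} := by
  set s := {ξ : Matrix (Fin m) (Fin d) ℝ | G ξ < ⊤} with hs
  have hconv : Convex ℝ s := by
    intro x hx y hy a b ha hb hab
    rcases eq_or_lt_of_le ha with h0 | h0
    · have hb1 : b = 1 := by linarith
      simpa [← h0, hb1] using hy
    rcases eq_or_lt_of_le hb with h1 | h1
    · have ha1 : a = 1 := by linarith
      simpa [← h1, ha1] using hx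
    have ha1 : a < 1 := by linarith
    have hb' : b = 1 - a := by linarith
    have := hG x y a ⟨h0, ha1⟩
    have hlt : C * (1 + G x + G y) < ⊤ := by
      apply ENNReal.mul_lt_top hCtop.lt_top
      exact ENNReal.add_lt_top.2 ⟨ENNReal.add_lt_top.2 ⟨ENNReal.one_lt_top, hx⟩, hy⟩
    have : G (a • x + (1 - a) • y) < ⊤ := lt_of_le_of_lt this hlt
    simpa [hb', hs] using this
  ext x
  constructor
  · intro hx
    have hcont : Continuous fun c : ℝ => c • x := by continuity
    have hopen : IsOpen ((fun c : ℝ => c • x) ⁻¹' interior s) :=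
      isOpen_interior.preimage hcont
    have h1 : (1 : ℝ) ∈ (fun c : ℝ => c • x) ⁻¹' interior s := by
      simpa using hx
    obtain ⟨ε, hε, hball⟩ := Metric.isOpen_iff.1 hopen 1 h1
    set c : ℝ := 1 + ε / 2 with hc
    have hc1 : 1 < c := by simp [hc]; positivity
    have hcmem : c • x ∈ interior s := by
      apply hball
      simp only [Metric.mem_ball, Real.dist_eq, hc]
      rw [show (1 + ε/2 - 1 : ℝ) = ε/2 by ring, abs_of_nonneg (by positivity)]
      linarith
    have hc0 : (0:ℝ) < c := by linarith
    refine Set.mem_iUnion₂.2 ⟨c⁻¹, ⟨by positivity, ?_⟩, ?_⟩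
    · exact inv_lt_one_of_one_lt₀ hc1
    · refine ⟨c • x, subset_closure (interior_subset hcmem), ?_⟩
      show c⁻¹ • (c • x) = x
      rw [smul_smul, inv_mul_cancel₀ (ne_of_gt hc0), one_smul]
  · intro hx
    obtain ⟨t, ⟨ht0, ht1⟩, y, hy, rfl⟩ := by
      simpa using Set.mem_iUnion₂.1 hx
    have := hconv.combo_interior_closure_mem_interior hzero hy
      (by linarith : (0:ℝ) < 1 - t) ht0 (by ring)
    simpa using this
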